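/- Let α, β be positive integers and let C be a Z2[u]Z2[u,v]-additive code in R1^α × R2^β. Then C is a (1+u,1+uv)-additive constacyclic code (τ(C) = C) if and only if its Gray image Φ(C) ⊆ Z2^{2α+8β} is invariant under the block-shift permutation σ (i.e., σ(Φ(C)) = Φ(C)). -/

import Mathlib

open TrivSqZeroExt Finset

set_option synthInstance.maxHeartbeats 1000000
set_option maxHeartbeats 2000000

noncomputable section

/-- `Z2` is the field with two elements. -/
abbrev Z2 := ZMod 2

/-- `R1 = Z2[u] = Z2 + uZ2` with `u² = 0`. -/
abbrev R1 := DualNumber Z2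

/-- `R2 = Z2[u,v] = Z2 + uZ2 + vZ2 + uvZ2` with `u² = v² = 0`, `uv = vu`,
realized as dual numbers over `R1`. -/
abbrev R2 := DualNumber R1

/-- The element `u` of `R1`. -/
def u1 : R1 := DualNumber.eps

/-- The inclusion of `Z2` into `R1`. -/
def ofZ2R1 (a : Z2) : R1 := TrivSqZeroExt.inl a

/-- The element `u` of `R2`. -/
def uu : R2 := TrivSqZeroExt.inl DualNumber.eps

/-- The element `v` of `R2`. -/
def vv : R2 := DualNumber.eps

/-- The inclusion of `Z2` into `R2`. -/
def ofZ2R2 (a : Z2) : R2 := TrivSqZeroExt.inl (TrivSqZeroExt.inl a)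

/-- `η : R2 → R1`, `a + ub + vc + uvd ↦ a + ub` (reduction modulo `v`),
as a ring homomorphism. -/
def eta : R2 →+* R1 where
  toFun := TrivSqZeroExt.fst
  map_one' := rfl
  map_mul' := TrivSqZeroExt.fst_mul
  map_zero' := rfl
  map_add' := TrivSqZeroExt.fst_add

/-- The ambient space `R1^α × R2^β`. -/
abbrev V (α β : ℕ) := (Fin α → R1) × (Fin β → R2)

/-- The scalar multiplication of `R2` on `R1^α × R2^β`:
`l • (a₀,…,a_{α-1},b₀,…,b_{β-1}) = (η(l)a₀,…,η(l)a_{α-1}, lb₀,…,lb_{β-1})`. -/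
instance instSMulV (α β : ℕ) : SMul R2 (V α β) :=
  ⟨fun l w => (fun i => eta l * w.1 i, fun j => l * w.2 j)⟩

lemma smulV_def {α β : ℕ} (l : R2) (w : V α β) :
    l • w = (fun i => eta l * w.1 i, fun j => l * w.2 j) := rfl

instance instMulActionV (α β : ℕ) : MulAction R2 (V α β) where
  one_smul w := by
    refine Prod.ext (funext fun i => ?_) (funext fun j => ?_)
    · show eta 1 * w.1 i = w.1 i; simp
    · show (1 : R2) * w.2 j = w.2 j; simp
  mul_smul l l' w := by
    refine Prod.ext (funext fun i => ?_) (funext fun j => ?_)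
    · show eta (l * l') * w.1 i = eta l * (eta l' * w.1 i); rw [map_mul, mul_assoc]
    · show l * l' * w.2 j = l * (l' * w.2 j); rw [mul_assoc]

instance instDistribMulActionV (α β : ℕ) : DistribMulAction R2 (V α β) where
  smul_zero l := by
    refine Prod.ext (funext fun i => ?_) (funext fun j => ?_)
    · show eta l * (0 : R1) = 0; simp
    · show l * (0 : R2) = 0; simp
  smul_add l w w' := by
    refine Prod.ext (funext fun i => ?_) (funext fun j => ?_)
    · show eta l * (w.1 i + w'.1 i) = eta l * w.1 i + eta l * w'.1 i; rw [mul_add]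
    · show l * (w.2 j + w'.2 j) = l * w.2 j + l * w'.2 j; rw [mul_add]

/-- `R1^α × R2^β` is an `R2`-module; a `Z2[u]Z2[u,v]`-additive code is an
`R2`-submodule of this module. -/
instance instModuleV (α β : ℕ) : Module R2 (V α β) where
  add_smul l l' w := by
    refine Prod.ext (funext fun i => ?_) (funext fun j => ?_)
    · show eta (l + l') * w.1 i = eta l * w.1 i + eta l' * w.1 i
      rw [map_add, add_mul]
    · show (l + l') * w.2 j = l * w.2 j + l' * w.2 j; rw [add_mul]
  zero_smul w := by
    refine Prod.ext (funext fun i => ?_) (funext fun j => ?_)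
    · show eta 0 * w.1 i = 0; simp
    · show (0 : R2) * w.2 j = 0; simp

/-- The cyclic shift `S` on `R1^α × R2^β`. -/
def shiftS {α β : ℕ} [NeZero α] [NeZero β] (w : V α β) : V α β :=
  (fun i => w.1 (i - 1), fun j => w.2 (j - 1))

/-- The `(1+u, 1+uv)`-constacyclic shift `τ` on `R1^α × R2^β`. -/
def tau {α β : ℕ} [NeZero α] [NeZero β] (w : V α β) : V α β :=
  (fun i => (if i = 0 then 1 + u1 else 1) * w.1 (i - 1),
   fun j => (if j = 0 then 1 + uu * vv else 1) * w.2 (j - 1))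

/-- The inner product on `R1^α × R2^β`:
`⟨x,y⟩ = uv·ι(Σᵢ xᵢyᵢ) + Σⱼ x_{α+j} y_{α+j}` where `ι : R1 → R2` is the
natural inclusion. -/
def innerP {α β : ℕ} (x y : V α β) : R2 :=
  uu * vv * TrivSqZeroExt.inl (∑ i, x.1 i * y.1 i) + ∑ j, x.2 j * y.2 j

/-- The additive dual of a code `C ⊆ R1^α × R2^β`. -/
def dualSet {α β : ℕ} (C : Set (V α β)) : Set (V α β) :=
  {y | ∀ x ∈ C, innerP x y = 0}

instance doubleNeZero (α : ℕ) [NeZero α] : NeZero (α + α) :=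
  ⟨by have := NeZero.ne α; omega⟩

/-- The image space of the Gray map: `Z2^{2α+8β}`, grouped as a block of
`2α` coordinates followed by four blocks of `2β` coordinates. -/
abbrev W (α β : ℕ) :=
  (Fin (α + α) → Z2) × (Fin (β + β) → Z2) × (Fin (β + β) → Z2) ×
    (Fin (β + β) → Z2) × (Fin (β + β) → Z2)

/-- Cyclic shift by one position of a tuple. -/
def cyc {n : ℕ} [NeZero n] {A : Type*} (f : Fin n → A) : Fin n → A :=
  fun i => f (i - 1)

/-- The block-shift permutation `σ` of `Z2^{2α+8β}`: the block of `2α`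
coordinates and each of the four blocks of `2β` coordinates are cyclically
shifted by one position. -/
def sigmaW {α β : ℕ} [NeZero α] [NeZero β] (w : W α β) : W α β :=
  (cyc w.1, cyc w.2.1, cyc w.2.2.1, cyc w.2.2.2.1, cyc w.2.2.2.2)

/-- The Gray map `Φ : R1^α × R2^β → Z2^{2α+8β}`. -/
def Phi {α β : ℕ} (w : V α β) : W α β :=
  let r : Fin α → Z2 := fun i => (w.1 i).fst
  let q : Fin α → Z2 := fun i => (w.1 i).snd
  let a : Fin β → Z2 := fun j => (w.2 j).fst.fst
  let b : Fin β → Z2 := fun j => (w.2 j).fst.snd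
  let c : Fin β → Z2 := fun j => (w.2 j).snd.fst
  let d : Fin β → Z2 := fun j => (w.2 j).snd.snd
  (Fin.append q (fun i => q i + r i),
   Fin.append d (fun j => a j + d j),
   Fin.append (fun j => b j + d j) (fun j => a j + b j + d j),
   Fin.append (fun j => c j + d j) (fun j => a j + c j + d j),
   Fin.append (fun j => b j + c j + d j) (fun j => a j + b j + c j + d j))

/-- Lee weight on `R1`: `w_L(r + uq) = w_H(q, q + r)`. -/
def leeR1 (x : R1) : ℕ :=
  (if x.snd ≠ 0 then 1 else 0) + (if x.snd + x.fst ≠ 0 then 1 else 0)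

/-- Lee weight on `R2`:
`w_L(a+ub+vc+uvd) = w_H(d, a+d, b+d, a+b+d, c+d, a+c+d, b+c+d, a+b+c+d)`. -/
def leeR2 (y : R2) : ℕ :=
  let a := y.fst.fst; let b := y.fst.snd; let c := y.snd.fst; let d := y.snd.snd
  (if d ≠ 0 then 1 else 0) + (if a + d ≠ 0 then 1 else 0) +
  (if b + d ≠ 0 then 1 else 0) + (if a + b + d ≠ 0 then 1 else 0) +
  (if c + d ≠ 0 then 1 else 0) + (if a + c + d ≠ 0 then 1 else 0) +
  (if b + c + d ≠ 0 then 1 else 0) + (if a + b + c + d ≠ 0 then 1 else 0)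

/-- Lee weight on `R1^α × R2^β`: the sum of the Lee weights of the
coordinates. -/
def leeWt {α β : ℕ} (w : V α β) : ℕ :=
  ∑ i, leeR1 (w.1 i) + ∑ j, leeR2 (w.2 j)

/-- Hamming weight on `Z2^{2α+8β}`. -/
def wtW {α β : ℕ} (w : W α β) : ℕ :=
  hammingNorm w.1 + hammingNorm w.2.1 + hammingNorm w.2.2.1 +
    hammingNorm w.2.2.2.1 + hammingNorm w.2.2.2.2

/-- Hamming distance on `Z2^{2α+8β}`. -/
def distW {α β : ℕ} (w w' : W α β) : ℕ :=
  hammingDist w.1 w'.1 + hammingDist w.2.1 w'.2.1 + hammingDist w.2.2.1 w'.2.2.1 +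
    hammingDist w.2.2.2.1 w'.2.2.2.1 + hammingDist w.2.2.2.2 w'.2.2.2.2



lemma val_zero_sub_one {n : ℕ} [NeZero n] : ((0:Fin n) - 1).val = n - 1 := by
  have hn := NeZero.pos n
  rw [Fin.sub_def]
  simp only [Fin.val_mk, Fin.val_zero, Nat.add_zero, Fin.val_one']
  rcases eq_or_lt_of_le (show 1 ≤ n from hn) with h | h
  · rw [← h]
  · rw [Nat.mod_eq_of_lt h, Nat.mod_eq_of_lt (by omega)]

lemma val_sub_one {n : ℕ} [NeZero n] (i : Fin n) (hi : i ≠ 0) : ((i - 1).val) = i.val - 1 := by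
  have hn := NeZero.pos n
  have hi' : 0 < i.val := by
    rcases Nat.eq_zero_or_pos i.val with h | h
    · exact absurd (Fin.ext h) hi
    · exact h
  have hlt := i.isLt
  rw [Fin.sub_def]
  simp only [Fin.val_mk, Fin.val_one']
  rcases eq_or_lt_of_le (show 1 ≤ n from hn) with h | h
  · omega
  · rw [Nat.mod_eq_of_lt h]
    have h2 : n - 1 + i.val = (i.val - 1) + 1 * n := by omega
    rw [h2, Nat.add_mul_mod_self_right, Nat.mod_eq_of_lt (by omega)]

lemma castAdd_zero_sub_one {n : ℕ} [NeZero n] :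
    Fin.castAdd n (0 : Fin n) - 1 = Fin.natAdd n ((0:Fin n) - 1) := by
  have hn := NeZero.pos n
  refine Fin.ext ?_
  rw [show Fin.castAdd n (0:Fin n) = (0 : Fin (n+n)) by rfl, val_zero_sub_one,
    Fin.coe_natAdd, val_zero_sub_one]
  omega

lemma castAdd_sub_one {n : ℕ} [NeZero n] (i : Fin n) (hi : i ≠ 0) :
    Fin.castAdd n i - 1 = Fin.castAdd n (i - 1) := by
  have hn := NeZero.pos n
  refine Fin.ext ?_
  rw [val_sub_one, Fin.coe_castAdd, Fin.coe_castAdd, val_sub_one _ hi]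
  simp only [ne_eq, Fin.ext_iff, Fin.val_zero, Fin.coe_castAdd]
  exact fun h => hi (Fin.ext h)

lemma natAdd_zero_sub_one {n : ℕ} [NeZero n] :
    Fin.natAdd n (0 : Fin n) - 1 = Fin.castAdd n ((0:Fin n) - 1) := by
  have hn := NeZero.pos n
  refine Fin.ext ?_
  rw [val_sub_one, Fin.coe_castAdd, Fin.coe_natAdd, val_zero_sub_one]
  · simp only [Fin.val_zero]; omega
  · simp only [ne_eq, Fin.ext_iff, Fin.val_zero, Fin.coe_natAdd]; omega

lemma natAdd_sub_one {n : ℕ} [NeZero n] (j : Fin n) (hj : j ≠ 0) :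
    Fin.natAdd n j - 1 = Fin.natAdd n (j - 1) := by
  have hn := NeZero.pos n
  have hj' : 0 < j.val := by
    rcases Nat.eq_zero_or_pos j.val with h | h
    · exact absurd (Fin.ext h) hj
    · exact h
  refine Fin.ext ?_
  rw [val_sub_one, Fin.coe_natAdd, Fin.coe_natAdd, val_sub_one _ hj]
  · omega
  · simp only [ne_eq, Fin.ext_iff, Fin.val_zero, Fin.coe_natAdd]; omega

lemma cyc_append {n : ℕ} [NeZero n] {A : Type*} (f g : Fin n → A) :
    cyc (Fin.append f g) = Fin.append (fun i => if i = 0 then g (i - 1) else f (i - 1))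
      (fun j => if j = 0 then f (j - 1) else g (j - 1)) := by
  funext k
  refine Fin.addCases (fun i => ?_) (fun j => ?_) k
  · rw [Fin.append_left]
    show Fin.append f g (Fin.castAdd n i - 1) = _
    by_cases hi : i = 0
    · subst hi
      rw [castAdd_zero_sub_one, Fin.append_right, if_pos rfl]
    · rw [castAdd_sub_one _ hi, Fin.append_left, if_neg hi]
  · rw [Fin.append_right]
    show Fin.append f g (Fin.natAdd n j - 1) = _
    by_cases hj : j = 0
    · subst hj
      rw [natAdd_zero_sub_one, Fin.append_left, if_pos rfl]
    · rw [natAdd_sub_one _ hj, Fin.append_right, if_neg hj]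

lemma oneAddU_mul_fst (x : R1) : ((1 + u1) * x).fst = x.fst := by
  simp only [u1, fst_mul, fst_add, fst_one, DualNumber.fst_eps, add_zero, one_mul]

lemma oneAddU_mul_snd (x : R1) : ((1 + u1) * x).snd = x.snd + x.fst := by
  simp only [u1, snd_mul, snd_add, fst_add, fst_one, snd_one, DualNumber.fst_eps,
    DualNumber.snd_eps, add_zero, zero_add, one_smul, smul_eq_mul, mul_one, op_smul_eq_mul]
  ring

lemma oneAddUV_mul_fst (y : R2) : ((1 + uu * vv) * y).fst = y.fst := by
  simp only [uu, vv, fst_mul, fst_add, fst_one, fst_inl, DualNumber.fst_eps, mul_zero,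
    add_zero, one_mul]

lemma oneAddUV_mul_snd_fst (y : R2) : ((1 + uu * vv) * y).snd.fst = y.snd.fst := by
  simp only [uu, vv, snd_mul, snd_add, fst_mul, fst_add, fst_one, snd_one, fst_inl, snd_inl,
    DualNumber.fst_eps, DualNumber.snd_eps, mul_zero, add_zero, zero_add, one_smul,
    smul_eq_mul, op_smul_eq_mul, smul_zero, mul_one, one_mul]
  simp [fst_add, fst_mul, smul_eq_mul]

lemma oneAddUV_mul_snd_snd (y : R2) : ((1 + uu * vv) * y).snd.snd = y.snd.snd + y.fst.fst := by
  simp only [uu, vv, snd_mul, snd_add, fst_mul, fst_add, fst_one, snd_one, fst_inl, snd_inl,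
    DualNumber.fst_eps, DualNumber.snd_eps, mul_zero, add_zero, zero_add, one_smul,
    smul_eq_mul, op_smul_eq_mul, smul_zero, mul_one, one_mul]
  simp [snd_add, snd_mul, fst_mul, smul_eq_mul, op_smul_eq_mul]

lemma phi_tau {α β : ℕ} [NeZero α] [NeZero β] (w : V α β) : Phi (tau w) = sigmaW (Phi w) := by
  have h2 : (2 : Z2) = 0 := rfl
  unfold Phi sigmaW
  dsimp only
  rw [cyc_append, cyc_append, cyc_append, cyc_append, cyc_append]
  refine Prod.ext ?_ (Prod.ext ?_ (Prod.ext ?_ (Prod.ext ?_ ?_))) <;> dsimp only <;>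
    refine congrArg₂ Fin.append (funext fun i => ?_) (funext fun i => ?_) <;>
    by_cases hi : i = 0 <;>
    simp only [tau, hi, one_mul, oneAddU_mul_fst, oneAddU_mul_snd,
      oneAddUV_mul_fst, oneAddUV_mul_snd_fst, oneAddUV_mul_snd_snd, if_true, if_false,
      eq_self_iff_true, ite_true, ite_false]
  all_goals try ring1
  all_goals (ring_nf; simp only [h2, mul_zero, add_zero, zero_add])

lemma phi_inj {α β : ℕ} : Function.Injective (Phi (α := α) (β := β)) := by
  intro w w' h
  have h1 := congrArg Prod.fst h
  have h2 := congrArg (fun p : W α β => p.2.1) h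
  have h3 := congrArg (fun p : W α β => p.2.2.1) h
  have h4 := congrArg (fun p : W α β => p.2.2.2.1) h
  have h5 := congrArg (fun p : W α β => p.2.2.2.2) h
  simp only [Phi] at h1 h2 h3 h4 h5
  refine Prod.ext (funext fun i => ?_) (funext fun j => ?_)
  · have e1 := congrFun h1 (Fin.castAdd α i)
    have e2 := congrFun h1 (Fin.natAdd α i)
    rw [Fin.append_left, Fin.append_left] at e1
    rw [Fin.append_right, Fin.append_right] at e2
    refine TrivSqZeroExt.ext ?_ e1
    linear_combination e2 - e1
  · have e1 := congrFun h2 (Fin.castAdd β j)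
    have e2 := congrFun h2 (Fin.natAdd β j)
    have e3 := congrFun h3 (Fin.castAdd β j)
    have e4 := congrFun h4 (Fin.castAdd β j)
    rw [Fin.append_left, Fin.append_left] at e1 e3 e4
    rw [Fin.append_right, Fin.append_right] at e2
    refine TrivSqZeroExt.ext (TrivSqZeroExt.ext ?_ ?_) (TrivSqZeroExt.ext ?_ ?_)
    · linear_combination e2 - e1
    · linear_combination e3 - e1
    · linear_combination e4 - e1
    · exact e1


/-- A `Z2[u]Z2[u,v]`-additive code `C` is `(1+u,1+uv)`-additive
constacyclic iff its Gray image is invariant under the block-shift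
permutation `σ`. -/
theorem constacyclic_iff_gray_image_shift_invariant (α β : ℕ) [NeZero α] [NeZero β]
    (C : Submodule R2 (V α β)) :
    tau '' (C : Set (V α β)) = (C : Set (V α β)) ↔
      sigmaW '' (Phi '' (C : Set (V α β))) = Phi '' (C : Set (V α β)) := by
  have himg : sigmaW '' (Phi '' (C : Set (V α β))) = Phi '' (tau '' (C : Set (V α β))) := by
    rw [Set.image_image, Set.image_image]
    exact (Set.image_congr' (fun w => phi_tau w)).symm
  rw [himg]
  exact (Set.image_eq_image phi_inj).symm

end
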